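/- If A is an NFA with m states and B is an NFA with n states, then the language L(A) ←sdi L(B) is accepted by some NFA with at most 3mn + 2m states. In particular, regular languages are closed under site-directed insertion. -/

import Mathlib

/-- Site-directed insertion (SDI) of string `y` into string `x`. -/
def sdiStr {α : Type} (x y : List α) : Set (List α) :=
  { w | ∃ x₁ u z v x₂ : List α,
      x = x₁ ++ u ++ v ++ x₂ ∧ y = u ++ z ++ v ∧ u ≠ [] ∧ v ≠ [] ∧
      w = x₁ ++ u ++ z ++ v ++ x₂ }

/-- Site-directed insertion extended to languages. -/
def sdiLang {α : Type} (L₁ L₂ : Set (List α)) : Set (List α) :=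
  { w | ∃ x ∈ L₁, ∃ y ∈ L₂, w ∈ sdiStr x y }

/-- Alphabetic site-directed insertion of string `y` into string `x`. -/
def asdiStr {α : Type} (x y : List α) : Set (List α) :=
  { w | ∃ (x₁ x₂ z : List α) (a b : α),
      x = x₁ ++ [a] ++ [b] ++ x₂ ∧ y = [a] ++ z ++ [b] ∧
      w = x₁ ++ [a] ++ z ++ [b] ++ x₂ }

/-- Alphabetic site-directed insertion extended to languages. -/
def asdiLang {α : Type} (L₁ L₂ : Set (List α)) : Set (List α) :=
  { w | ∃ x ∈ L₁, ∃ y ∈ L₂, w ∈ asdiStr x y }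

/-- Maximal site-directed insertion of string `y` into string `x`. -/
def maxSdiStr {α : Type} (x y : List α) : Set (List α) :=
  { w | ∃ x₁ u z v x₂ : List α,
      x = x₁ ++ u ++ v ++ x₂ ∧ y = u ++ z ++ v ∧ u ≠ [] ∧ v ≠ [] ∧
      w = x₁ ++ u ++ z ++ v ++ x₂ ∧
      ¬ ∃ x₁' x₂' z' : List α, x₁' <:+ x₁ ∧ x₂' <+: x₂ ∧
          x₁' ++ x₂' ≠ [] ∧ y = x₁' ++ u ++ z' ++ v ++ x₂' }

/-- Maximal site-directed insertion extended to languages. -/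
def maxSdiLang {α : Type} (L₁ L₂ : Set (List α)) : Set (List α) :=
  { w | ∃ x ∈ L₁, ∃ y ∈ L₂, w ∈ maxSdiStr x y }

/-- Minimal site-directed insertion of string `y` into string `x`:
the words `u` and `v` of the matched outfix must be unbordered. -/
def minSdiStr {α : Type} (x y : List α) : Set (List α) :=
  { w | ∃ x₁ u z v x₂ : List α,
      x = x₁ ++ u ++ v ++ x₂ ∧ y = u ++ z ++ v ∧ u ≠ [] ∧ v ≠ [] ∧
      w = x₁ ++ u ++ z ++ v ++ x₂ ∧
      (∀ s : List α, s <:+ u → s ≠ [] → s ≠ u → ¬ s <+: u) ∧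
      (∀ p : List α, p <+: v → p ≠ [] → p ≠ v → ¬ p <:+ v) }

/-- Minimal site-directed insertion extended to languages. -/
def minSdiLang {α : Type} (L₁ L₂ : Set (List α)) : Set (List α) :=
  { w | ∃ x ∈ L₁, ∃ y ∈ L₂, w ∈ minSdiStr x y }


namespace SDIProof

open NFA

variable {α : Type} {σ σA σB : Type}

theorem evalFrom_cons (N : NFA α σ) (S : Set σ) (a : α) (w : List α) :
    N.evalFrom S (a :: w) = N.evalFrom (N.stepSet S a) w := rfl

theorem mem_evalFrom_iff (N : NFA α σ) {S : Set σ} {w : List α} {t : σ} :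
    t ∈ N.evalFrom S w ↔ ∃ s ∈ S, t ∈ N.evalFrom {s} w := by
  induction w generalizing S with
  | nil => simp [NFA.evalFrom_nil]
  | cons a w ih =>
    rw [evalFrom_cons, ih]
    constructor
    · rintro ⟨s', hs', ht⟩
      rw [NFA.mem_stepSet] at hs'
      obtain ⟨s, hs, hstep⟩ := hs'
      refine ⟨s, hs, ?_⟩
      rw [evalFrom_cons, ih]
      exact ⟨s', by rw [NFA.mem_stepSet]; exact ⟨s, rfl, hstep⟩, ht⟩
    · rintro ⟨s, hs, ht⟩
      rw [evalFrom_cons, ih] at ht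
      obtain ⟨s', hs', ht⟩ := ht
      rw [NFA.mem_stepSet] at hs'
      obtain ⟨s₀, hs₀, hstep⟩ := hs'
      cases hs₀
      exact ⟨s', by rw [NFA.mem_stepSet]; exact ⟨s, hs, hstep⟩, ht⟩

/-- `Run N s w t` : the NFA `N` can go from state `s` to state `t` reading `w`. -/
def Run (N : NFA α σ) (s : σ) (w : List α) (t : σ) : Prop := t ∈ N.evalFrom {s} w

theorem run_nil {N : NFA α σ} {s t : σ} : Run N s [] t ↔ t = s := by
  simp [Run, NFA.evalFrom_nil]

theorem run_cons {N : NFA α σ} {s t : σ} {a : α} {w : List α} :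
    Run N s (a :: w) t ↔ ∃ s', s' ∈ N.step s a ∧ Run N s' w t := by
  rw [Run, evalFrom_cons, mem_evalFrom_iff]
  simp only [NFA.mem_stepSet, Set.mem_singleton_iff]
  constructor
  · rintro ⟨s', ⟨s₀, rfl, h⟩, ht⟩
    exact ⟨s', h, ht⟩
  · rintro ⟨s', h, ht⟩
    exact ⟨s', ⟨s, rfl, h⟩, ht⟩

theorem run_append {N : NFA α σ} {s t : σ} {w₁ w₂ : List α} :
    Run N s (w₁ ++ w₂) t ↔ ∃ m, Run N s w₁ m ∧ Run N m w₂ t := by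
  induction w₁ generalizing s with
  | nil => simp [run_nil]
  | cons a w ih =>
    simp only [List.cons_append, run_cons, ih]
    constructor
    · rintro ⟨s', h, m, h1, h2⟩; exact ⟨m, ⟨s', h, h1⟩, h2⟩
    · rintro ⟨m, ⟨s', h, h1⟩, h2⟩; exact ⟨s', h, m, h1, h2⟩

theorem accepts_iff_run {N : NFA α σ} {w : List α} :
    w ∈ N.accepts ↔ ∃ s ∈ N.start, ∃ f ∈ N.accept, Run N s w f := by
  rw [NFA.mem_accepts]
  constructor
  · rintro ⟨f, hf, hw⟩
    rw [mem_evalFrom_iff] at hw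
    obtain ⟨s, hs, hr⟩ := hw
    exact ⟨s, hs, f, hf, hr⟩
  · rintro ⟨s, hs, f, hf, hr⟩
    exact ⟨f, hf, (mem_evalFrom_iff N).mpr ⟨s, hs, hr⟩⟩

/-- State space of the SDI construction : `2·|σA| + 3·|σA|·|σB|` states. -/
abbrev St (σA σB : Type) : Type := σA ⊕ σA ⊕ σA × σB ⊕ σA × σB ⊕ σA × σB

/-- phase 1 : reading `x₁`, simulating `A` only. -/
def q1 (p : σA) : St σA σB := Sum.inl p
/-- phase 5 : reading `x₂`, simulating `A` only (insertion finished). -/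
def q5 (p : σA) : St σA σB := Sum.inr (Sum.inl p)
/-- phase 2 : reading `u`, simulating `A` and `B` in parallel. -/
def q2 (p : σA) (r : σB) : St σA σB := Sum.inr (Sum.inr (Sum.inl (p, r)))
/-- phase 3 : reading `z`, simulating `B`; `A`'s state is frozen. -/
def q3 (p : σA) (r : σB) : St σA σB := Sum.inr (Sum.inr (Sum.inr (Sum.inl (p, r))))
/-- phase 4 : reading `v`, simulating `A` and `B` in parallel. -/
def q4 (p : σA) (r : σB) : St σA σB := Sum.inr (Sum.inr (Sum.inr (Sum.inr (p, r))))

/-- The NFA recognising `L(A) ←sdi L(B)`. -/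
def sdiNFA (A : NFA α σA) (B : NFA α σB) : NFA α (St σA σB) where
  step s a :=
    match s with
    | Sum.inl p =>
        {t | (∃ p' ∈ A.step p a, t = q1 p') ∨
          ∃ p' ∈ A.step p a, ∃ r0 ∈ B.start, ∃ r' ∈ B.step r0 a,
            (t = q2 p' r' ∨ t = q3 p' r')}
    | Sum.inr (Sum.inl p) => {t | ∃ p' ∈ A.step p a, t = q5 p'}
    | Sum.inr (Sum.inr (Sum.inl (p, r))) =>
        {t | ∃ p' ∈ A.step p a, ∃ r' ∈ B.step r a, (t = q2 p' r' ∨ t = q3 p' r')}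
    | Sum.inr (Sum.inr (Sum.inr (Sum.inl (p, r)))) =>
        {t | (∃ r' ∈ B.step r a, t = q3 p r') ∨
          ∃ p' ∈ A.step p a, ∃ r' ∈ B.step r a,
            (t = q4 p' r' ∨ (r' ∈ B.accept ∧ t = q5 p'))}
    | Sum.inr (Sum.inr (Sum.inr (Sum.inr (p, r)))) =>
        {t | ∃ p' ∈ A.step p a, ∃ r' ∈ B.step r a,
          (t = q4 p' r' ∨ (r' ∈ B.accept ∧ t = q5 p'))}
  start := {s | ∃ p ∈ A.start, s = q1 p}
  accept := {s | ∃ p ∈ A.accept, s = q5 p}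

variable {A : NFA α σA} {B : NFA α σB}

theorem mem_step_q1 {p : σA} {a : α} {t : St σA σB} :
    t ∈ (sdiNFA A B).step (q1 p) a ↔
      (∃ p' ∈ A.step p a, t = q1 p') ∨
        ∃ p' ∈ A.step p a, ∃ r0 ∈ B.start, ∃ r' ∈ B.step r0 a,
          (t = q2 p' r' ∨ t = q3 p' r') := Iff.rfl

theorem mem_step_q5 {p : σA} {a : α} {t : St σA σB} :
    t ∈ (sdiNFA A B).step (q5 p) a ↔ ∃ p' ∈ A.step p a, t = q5 p' := Iff.rfl

theorem mem_step_q2 {p : σA} {r : σB} {a : α} {t : St σA σB} :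
    t ∈ (sdiNFA A B).step (q2 p r) a ↔
      ∃ p' ∈ A.step p a, ∃ r' ∈ B.step r a, (t = q2 p' r' ∨ t = q3 p' r') := Iff.rfl

theorem mem_step_q3 {p : σA} {r : σB} {a : α} {t : St σA σB} :
    t ∈ (sdiNFA A B).step (q3 p r) a ↔
      (∃ r' ∈ B.step r a, t = q3 p r') ∨
        ∃ p' ∈ A.step p a, ∃ r' ∈ B.step r a,
          (t = q4 p' r' ∨ (r' ∈ B.accept ∧ t = q5 p')) := Iff.rfl

theorem mem_step_q4 {p : σA} {r : σB} {a : α} {t : St σA σB} :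
    t ∈ (sdiNFA A B).step (q4 p r) a ↔
      ∃ p' ∈ A.step p a, ∃ r' ∈ B.step r a,
        (t = q4 p' r' ∨ (r' ∈ B.accept ∧ t = q5 p')) := Iff.rfl

/-! ### Forward simulation lemmas -/

theorem f1 {p p1 : σA} {w : List α} (h : Run A p w p1) :
    Run (sdiNFA A B) (q1 p) w (q1 p1) := by
  induction w generalizing p with
  | nil => rw [run_nil] at h ⊢; rw [h]
  | cons a w ih =>
    obtain ⟨p', hp', hr⟩ := run_cons.mp h
    exact run_cons.mpr ⟨q1 p', Or.inl ⟨p', hp', rfl⟩, ih hr⟩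

theorem f5 {p pf : σA} {w : List α} (h : Run A p w pf) :
    Run (sdiNFA A B) (q5 p) w (q5 pf) := by
  induction w generalizing p with
  | nil => rw [run_nil] at h ⊢; rw [h]
  | cons a w ih =>
    obtain ⟨p', hp', hr⟩ := run_cons.mp h
    exact run_cons.mpr ⟨q5 p', ⟨p', hp', rfl⟩, ih hr⟩

theorem f3z {p : σA} {r r' : σB} {w : List α} (h : Run B r w r') :
    Run (sdiNFA A B) (q3 p r) w (q3 p r') := by
  induction w generalizing r with
  | nil => rw [run_nil] at h ⊢; rw [h]
  | cons a w ih =>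
    obtain ⟨r'', hr'', hr⟩ := run_cons.mp h
    exact run_cons.mpr ⟨q3 p r'', Or.inl ⟨r'', hr'', rfl⟩, ih hr⟩

theorem f2mid {p p2 : σA} {r r2 : σB} {w : List α} (hw : w ≠ [])
    (hA : Run A p w p2) (hB : Run B r w r2) :
    Run (sdiNFA A B) (q2 p r) w (q3 p2 r2) := by
  induction w generalizing p r with
  | nil => exact absurd rfl hw
  | cons a w ih =>
    obtain ⟨p', hp', hrA⟩ := run_cons.mp hA
    obtain ⟨r', hr', hrB⟩ := run_cons.mp hB
    rcases eq_or_ne w [] with rfl | hne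
    · rw [run_nil] at hrA hrB
      subst hrA; subst hrB
      exact run_cons.mpr ⟨q3 p2 r2, ⟨p2, hp', r2, hr', Or.inr rfl⟩, run_nil.mpr rfl⟩
    · exact run_cons.mpr ⟨q2 p' r', ⟨p', hp', r', hr', Or.inl rfl⟩, ih hne hrA hrB⟩

theorem f_u {p p2 : σA} {r0 r2 : σB} {w : List α} (hw : w ≠ []) (hr0 : r0 ∈ B.start)
    (hA : Run A p w p2) (hB : Run B r0 w r2) :
    Run (sdiNFA A B) (q1 p) w (q3 p2 r2) := by
  cases w with
  | nil => exact absurd rfl hw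
  | cons a w =>
    obtain ⟨p', hp', hrA⟩ := run_cons.mp hA
    obtain ⟨r', hr', hrB⟩ := run_cons.mp hB
    rcases eq_or_ne w [] with rfl | hne
    · rw [run_nil] at hrA hrB
      subst hrA; subst hrB
      exact run_cons.mpr ⟨q3 p2 r2,
        Or.inr ⟨p2, hp', r0, hr0, r2, hr', Or.inr rfl⟩, run_nil.mpr rfl⟩
    · exact run_cons.mpr ⟨q2 p' r',
        Or.inr ⟨p', hp', r0, hr0, r', hr', Or.inl rfl⟩, f2mid hne hrA hrB⟩

theorem f4 {p p3 : σA} {r rf : σB} {w : List α} (hw : w ≠ [])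
    (hA : Run A p w p3) (hB : Run B r w rf) (hrf : rf ∈ B.accept) :
    Run (sdiNFA A B) (q4 p r) w (q5 p3) := by
  induction w generalizing p r with
  | nil => exact absurd rfl hw
  | cons a w ih =>
    obtain ⟨p', hp', hrA⟩ := run_cons.mp hA
    obtain ⟨r', hr', hrB⟩ := run_cons.mp hB
    rcases eq_or_ne w [] with rfl | hne
    · rw [run_nil] at hrA hrB
      subst hrA; subst hrB
      exact run_cons.mpr ⟨q5 p3, ⟨p3, hp', rf, hr', Or.inr ⟨hrf, rfl⟩⟩, run_nil.mpr rfl⟩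
    · exact run_cons.mpr ⟨q4 p' r', ⟨p', hp', r', hr', Or.inl rfl⟩, ih hne hrA hrB⟩

theorem f3v {p p3 : σA} {r rf : σB} {w : List α} (hw : w ≠ [])
    (hA : Run A p w p3) (hB : Run B r w rf) (hrf : rf ∈ B.accept) :
    Run (sdiNFA A B) (q3 p r) w (q5 p3) := by
  cases w with
  | nil => exact absurd rfl hw
  | cons a w =>
    obtain ⟨p', hp', hrA⟩ := run_cons.mp hA
    obtain ⟨r', hr', hrB⟩ := run_cons.mp hB
    rcases eq_or_ne w [] with rfl | hne
    · rw [run_nil] at hrA hrB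
      subst hrA; subst hrB
      exact run_cons.mpr ⟨q5 p3,
        Or.inr ⟨p3, hp', rf, hr', Or.inr ⟨hrf, rfl⟩⟩, run_nil.mpr rfl⟩
    · exact run_cons.mpr ⟨q4 p' r',
        Or.inr ⟨p', hp', r', hr', Or.inl rfl⟩, f4 hne hrA hrB hrf⟩

/-! ### Backward (extraction) lemmas -/

theorem b5 {p pf : σA} {w : List α} (h : Run (sdiNFA A B) (q5 p) w (q5 pf)) :
    Run A p w pf := by
  induction w generalizing p with
  | nil =>
    rw [run_nil] at h ⊢
    simpa [q5] using h
  | cons a w ih =>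
    obtain ⟨s', hs', hr⟩ := run_cons.mp h
    obtain ⟨p', hp', rfl⟩ := mem_step_q5.mp hs'
    exact run_cons.mpr ⟨p', hp', ih hr⟩

theorem b4 {p : σA} {r : σB} {pf : σA} {w : List α}
    (h : Run (sdiNFA A B) (q4 p r) w (q5 pf)) :
    ∃ v₁ x₂ p3 rf, w = v₁ ++ x₂ ∧ v₁ ≠ [] ∧ Run A p v₁ p3 ∧ Run A p3 x₂ pf ∧
      rf ∈ B.accept ∧ Run B r v₁ rf := by
  induction w generalizing p r with
  | nil => rw [run_nil] at h; simp [q4, q5] at h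
  | cons a w ih =>
    obtain ⟨s', hs', hr⟩ := run_cons.mp h
    obtain ⟨p', hp', r', hr', hcase⟩ := mem_step_q4.mp hs'
    rcases hcase with rfl | ⟨hacc, rfl⟩
    · obtain ⟨v₁, x₂, p3, rf, rfl, hv, hA1, hA2, hrf, hB⟩ := ih hr
      exact ⟨a :: v₁, x₂, p3, rf, rfl, by simp, run_cons.mpr ⟨p', hp', hA1⟩,
        hA2, hrf, run_cons.mpr ⟨r', hr', hB⟩⟩
    · exact ⟨[a], w, p', r', rfl, by simp, run_cons.mpr ⟨p', hp', run_nil.mpr rfl⟩,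
        b5 hr, hacc, run_cons.mpr ⟨r', hr', run_nil.mpr rfl⟩⟩

theorem b3 {p : σA} {r : σB} {pf : σA} {w : List α}
    (h : Run (sdiNFA A B) (q3 p r) w (q5 pf)) :
    ∃ z v x₂ p3 rf, w = z ++ v ++ x₂ ∧ v ≠ [] ∧ Run A p v p3 ∧ Run A p3 x₂ pf ∧
      rf ∈ B.accept ∧ Run B r (z ++ v) rf := by
  induction w generalizing r with
  | nil => rw [run_nil] at h; simp [q3, q5] at h
  | cons a w ih =>
    obtain ⟨s', hs', hr⟩ := run_cons.mp h
    rcases mem_step_q3.mp hs' with ⟨r', hr', rfl⟩ | ⟨p', hp', r', hr', hcase⟩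
    · obtain ⟨z, v, x₂, p3, rf, rfl, hv, hA1, hA2, hrf, hB⟩ := ih hr
      exact ⟨a :: z, v, x₂, p3, rf, rfl, hv, hA1, hA2, hrf,
        run_cons.mpr ⟨r', hr', hB⟩⟩
    · rcases hcase with rfl | ⟨hacc, rfl⟩
      · obtain ⟨v₁, x₂, p3, rf, rfl, _, hA1, hA2, hrf, hB⟩ := b4 hr
        exact ⟨[], a :: v₁, x₂, p3, rf, rfl, by simp,
          run_cons.mpr ⟨p', hp', hA1⟩, hA2, hrf, run_cons.mpr ⟨r', hr', hB⟩⟩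
      · exact ⟨[], [a], w, p', r', rfl, by simp,
          run_cons.mpr ⟨p', hp', run_nil.mpr rfl⟩, b5 hr, hacc,
          run_cons.mpr ⟨r', hr', run_nil.mpr rfl⟩⟩

theorem b2 {p : σA} {r : σB} {pf : σA} {w : List α}
    (h : Run (sdiNFA A B) (q2 p r) w (q5 pf)) :
    ∃ u₁ z v x₂ p2 p3 rf, w = u₁ ++ z ++ v ++ x₂ ∧ u₁ ≠ [] ∧ v ≠ [] ∧
      Run A p u₁ p2 ∧ Run A p2 v p3 ∧ Run A p3 x₂ pf ∧
      Run B r (u₁ ++ z ++ v) rf ∧ rf ∈ B.accept := by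
  induction w generalizing p r with
  | nil => rw [run_nil] at h; simp [q2, q5] at h
  | cons a w ih =>
    obtain ⟨s', hs', hr⟩ := run_cons.mp h
    obtain ⟨p', hp', r', hr', hcase⟩ := mem_step_q2.mp hs'
    rcases hcase with rfl | rfl
    · obtain ⟨u₁, z, v, x₂, p2, p3, rf, rfl, hu, hv, hA1, hA2, hA3, hB, hacc⟩ := ih hr
      exact ⟨a :: u₁, z, v, x₂, p2, p3, rf, rfl, by simp, hv,
        run_cons.mpr ⟨p', hp', hA1⟩, hA2, hA3, run_cons.mpr ⟨r', hr', hB⟩, hacc⟩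
    · obtain ⟨z, v, x₂, p3, rf, rfl, hv, hA1, hA2, hrf, hB⟩ := b3 hr
      exact ⟨[a], z, v, x₂, p', p3, rf, rfl, by simp, hv,
        run_cons.mpr ⟨p', hp', run_nil.mpr rfl⟩, hA1, hA2,
        run_cons.mpr ⟨r', hr', hB⟩, hrf⟩

theorem b1 {p pf : σA} {w : List α} (h : Run (sdiNFA A B) (q1 p) w (q5 pf)) :
    ∃ x₁ u z v x₂ p1 p2 p3 r0 rf, w = x₁ ++ u ++ z ++ v ++ x₂ ∧ u ≠ [] ∧ v ≠ [] ∧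
      Run A p x₁ p1 ∧ Run A p1 u p2 ∧ Run A p2 v p3 ∧ Run A p3 x₂ pf ∧
      r0 ∈ B.start ∧ Run B r0 (u ++ z ++ v) rf ∧ rf ∈ B.accept := by
  induction w generalizing p with
  | nil => rw [run_nil] at h; simp [q1, q5] at h
  | cons a w ih =>
    obtain ⟨s', hs', hr⟩ := run_cons.mp h
    rcases mem_step_q1.mp hs' with ⟨p', hp', rfl⟩ | ⟨p', hp', r0, hr0, r', hr', hcase⟩
    · obtain ⟨x₁, u, z, v, x₂, p1, p2, p3, r0, rf, rfl, hu, hv,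
        h1, h2, h3, h4, hb0, hb, hbf⟩ := ih hr
      exact ⟨a :: x₁, u, z, v, x₂, p1, p2, p3, r0, rf, rfl, hu, hv,
        run_cons.mpr ⟨p', hp', h1⟩, h2, h3, h4, hb0, hb, hbf⟩
    · rcases hcase with rfl | rfl
      · obtain ⟨u₁, z, v, x₂, p2, p3, rf, rfl, hu, hv, hA1, hA2, hA3, hB, hacc⟩ := b2 hr
        exact ⟨[], a :: u₁, z, v, x₂, p, p2, p3, r0, rf, rfl, by simp, hv,
          run_nil.mpr rfl, run_cons.mpr ⟨p', hp', hA1⟩, hA2, hA3, hr0,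
          run_cons.mpr ⟨r', hr', hB⟩, hacc⟩
      · obtain ⟨z, v, x₂, p3, rf, rfl, hv, hA1, hA2, hrf, hB⟩ := b3 hr
        exact ⟨[], [a], z, v, x₂, p, p', p3, r0, rf, rfl, by simp, hv,
          run_nil.mpr rfl, run_cons.mpr ⟨p', hp', run_nil.mpr rfl⟩, hA1, hA2, hr0,
          run_cons.mpr ⟨r', hr', hB⟩, hrf⟩

/-! ### Correctness -/

theorem sdiNFA_accepts (A : NFA α σA) (B : NFA α σB) :
    (sdiNFA A B).accepts = sdiLang A.accepts B.accepts := by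
  ext w
  rw [accepts_iff_run]
  constructor
  · rintro ⟨s, hs, f, hf, hr⟩
    obtain ⟨p0, hp0, rfl⟩ := hs
    obtain ⟨pf, hpf, rfl⟩ := hf
    obtain ⟨x₁, u, z, v, x₂, p1, p2, p3, r0, rf, rfl, hu, hv,
      h1, h2, h3, h4, hb0, hb, hbf⟩ := b1 hr
    refine ⟨x₁ ++ u ++ v ++ x₂, ?_, u ++ z ++ v, ?_,
      x₁, u, z, v, x₂, rfl, rfl, hu, hv, rfl⟩
    · exact accepts_iff_run.mpr ⟨p0, hp0, pf, hpf,
        run_append.mpr ⟨p3, run_append.mpr ⟨p2, run_append.mpr ⟨p1, h1, h2⟩, h3⟩, h4⟩⟩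
    · exact accepts_iff_run.mpr ⟨r0, hb0, rf, hbf, hb⟩
  · rintro ⟨x, hx, y, hy, x₁, u, z, v, x₂, rfl, rfl, hu, hv, rfl⟩
    replace hx := accepts_iff_run.mp hx; replace hy := accepts_iff_run.mp hy
    obtain ⟨p0, hp0, pf, hpf, hxr⟩ := hx
    obtain ⟨r0, hr0, rf, hrf, hyr⟩ := hy
    obtain ⟨p3, hxr, h4⟩ := run_append.mp hxr
    obtain ⟨p2, hxr, h3⟩ := run_append.mp hxr
    obtain ⟨p1, h1, h2⟩ := run_append.mp hxr
    obtain ⟨r3, hyr, hB3⟩ := run_append.mp hyr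
    obtain ⟨r2, hB1, hB2⟩ := run_append.mp hyr
    refine ⟨q1 p0, ⟨p0, hp0, rfl⟩, q5 pf, ⟨pf, hpf, rfl⟩, ?_⟩
    exact run_append.mpr ⟨q5 p3,
      run_append.mpr ⟨q3 p2 r3,
        run_append.mpr ⟨q3 p2 r2,
          run_append.mpr ⟨q1 p1, f1 h1, f_u hu hr0 h2 hB1⟩, f3z hB2⟩,
        f3v hv h3 hB3 hrf⟩, f5 h4⟩

end SDIProof

/-- If `A` is an NFA with `m` states and `B` an NFA with `n` states, then
`L(A) ←sdi L(B)` is accepted by an NFA with at most `3mn + 2m` states.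
In particular, regular languages are closed under site-directed insertion. -/
theorem sdi_nfa_upper_bound {α : Type} {σA σB : Type} [Fintype σA] [Fintype σB]
    {m n : ℕ} (A : NFA α σA) (B : NFA α σB)
    (hm : Fintype.card σA = m) (hn : Fintype.card σB = n) :
    (∃ (σ : Type) (inst : Fintype σ) (C : NFA α σ),
        @Fintype.card σ inst ≤ 3 * m * n + 2 * m ∧
        C.accepts = sdiLang A.accepts B.accepts) ∧
    (∀ L₁ L₂ : Language α, L₁.IsRegular → L₂.IsRegular →
        Language.IsRegular (sdiLang L₁ L₂)) := by
  constructor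
  · refine ⟨SDIProof.St σA σB, inferInstance, SDIProof.sdiNFA A B, ?_,
      SDIProof.sdiNFA_accepts A B⟩
    have hcard : Fintype.card (SDIProof.St σA σB) = 2 * m + 3 * (m * n) := by
      simp only [SDIProof.St, Fintype.card_sum, Fintype.card_prod, hm, hn]
      ring
    exact le_of_eq (by rw [hcard]; ring)
  · rintro L₁ L₂ ⟨σ₁, i₁, D₁, hD₁⟩ ⟨σ₂, i₂, D₂, hD₂⟩
    haveI := i₁; haveI := i₂
    refine ⟨Set (SDIProof.St σ₁ σ₂), Fintype.ofFinite _,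
      (SDIProof.sdiNFA D₁.toNFA D₂.toNFA).toDFA, ?_⟩
    rw [NFA.toDFA_correct, SDIProof.sdiNFA_accepts, DFA.toNFA_correct,
      DFA.toNFA_correct, hD₁, hD₂]
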